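/- Let f : X → Y and g : Y → Z be continuous maps between topological spaces, and assume f is surjective. If both f and the composite g ∘ f are Serre fibrations, then g is a Serre fibration. -/

import Mathlib

/-- A map `f : E → B` is a Serre fibration if for every `n ≥ 1` it has the homotopy lifting
property for the inclusion `[0,1]^{n-1} × {0} ↪ [0,1]^{n-1} × [0,1] = [0,1]^n`:
given continuous `H₀ : [0,1]^{n-1} → E` and `H : [0,1]^n → B` with `f (H₀ s) = H (s, 0)`,
there is a continuous lift `L : [0,1]^n → E` with `L (s, 0) = H₀ s` and `f ∘ L = H`. -/
def IsSerreFibration {E B : Type*} [TopologicalSpace E] [TopologicalSpace B]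
    (f : E → B) : Prop :=
  ∀ (m : ℕ) (H₀ : C((Fin m → unitInterval), E))
    (H : C((Fin m → unitInterval) × unitInterval, B)),
    (∀ s, f (H₀ s) = H (s, 0)) →
    ∃ L : C((Fin m → unitInterval) × unitInterval, E),
      (∀ s, L (s, 0) = H₀ s) ∧ ∀ p, f (L p) = H p

/-- The cube `[0,1]^{m+1}` splits as `[0,1]^m × [0,1]`. -/
def cubeSplit (m : ℕ) : (Fin (m + 1) → unitInterval) ≃ₜ (Fin m → unitInterval) × unitInterval :=
  { toEquiv := (Fin.consEquiv (fun _ : Fin (m + 1) => unitInterval)).symm.trans (Equiv.prodComm _ _)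
    continuous_toFun := by
      apply Continuous.prodMk
      · exact continuous_pi fun i => continuous_apply _
      · exact continuous_apply _
    continuous_invFun := by
      apply continuous_pi
      intro j
      refine Fin.cases ?_ ?_ j
      · simpa using continuous_snd
      · intro i
        simp
        exact (continuous_apply i).comp continuous_fst }

/-- Any continuous map from a cube lifts through a surjective Serre fibration. -/
theorem lift_cube {X Y : Type} [TopologicalSpace X] [TopologicalSpace Y]
    (f : X → Y) (hsurj : Function.Surjective f) (hf : IsSerreFibration f) :
    ∀ (m : ℕ) (h : C((Fin m → unitInterval), Y)),
      ∃ k : C((Fin m → unitInterval), X), ∀ s, f (k s) = h s := by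
  intro m
  induction m with
  | zero =>
    intro h
    obtain ⟨x, hx⟩ := hsurj (h default)
    exact ⟨ContinuousMap.const _ x, fun s => by
      simp [hx, Subsingleton.elim s default]⟩
  | succ m ih =>
    intro h
    set e := cubeSplit m
    set h' : C((Fin m → unitInterval) × unitInterval, Y) :=
      h.comp (e.symm : C(_, _)) with hh'
    obtain ⟨k₀, hk₀⟩ := ih (h'.comp (ContinuousMap.id _ |>.prodMk
      (ContinuousMap.const _ (0 : unitInterval))))
    obtain ⟨L, hL0, hLf⟩ := hf m k₀ h' (fun s => hk₀ s)
    refine ⟨L.comp (e : C(_, _)), fun s => ?_⟩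
    have := hLf (e s)
    simpa [hh'] using this

/-- If `f : X → Y` is a surjective Serre fibration and `g ∘ f` is a Serre
fibration, then `g : Y → Z` is a Serre fibration. -/
theorem stmt12 {X Y Z : Type} [TopologicalSpace X] [TopologicalSpace Y] [TopologicalSpace Z]
    (f : X → Y) (g : Y → Z) (hf_cont : Continuous f) (hg_cont : Continuous g)
    (hsurj : Function.Surjective f) (hf : IsSerreFibration f)
    (hgf : IsSerreFibration (g ∘ f)) : IsSerreFibration g := by
  intro m H₀ H hcomp
  obtain ⟨K₀, hK₀⟩ := lift_cube f hsurj hf m H₀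
  obtain ⟨L', hL'0, hL'⟩ := hgf m K₀ H (fun s => by
    simp [Function.comp, hK₀, hcomp])
  refine ⟨(⟨f, hf_cont⟩ : C(X, Y)).comp L', fun s => ?_, fun p => ?_⟩
  · simp [hL'0, hK₀]
  · simpa [Function.comp] using hL' p
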